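/- Discrete sub-critical boundary estimate: let λ₁ > 0, λ₂ < 0, γ₀² ≤ −λ₂/λ₁, γ₁² ≤ −λ₁/λ₂, and set penalties τ₀₁ = λ₁, τ₀₂ = γ₀λ₁, τ_{N2} = −λ₂, τ_{N1} = −γ₁λ₂. Then for all real a₁, a₂ (boundary values of w₁, w₂ at node 0) and b₁, b₂ (values at node N): [λ₁a₁² + λ₂a₂² − (τ₀₁ a₁(a₁ − γ₀a₂) + τ₀₂ a₂(a₁ − γ₀a₂))] − [λ₁b₁² + λ₂b₂² + (τ_{N1} b₁(b₂ − γ₁b₁) + τ_{N2} b₂(b₂ − γ₁b₁))] = (λ₂ + λ₁γ₀²)a₂² − (λ₁ + λ₂γ₁²)b₁² ≤ 0. -/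
import Mathlib

theorem discrete_subcritical_estimate (lam1 lam2 g0 g1 t01 t02 tN1 tN2 a1 a2 b1 b2 : ℝ)
    (h1 : 0 < lam1) (h2 : lam2 < 0)
    (hg0 : g0 ^ 2 ≤ -lam2 / lam1) (hg1 : g1 ^ 2 ≤ -lam1 / lam2)
    (ht01 : t01 = lam1) (ht02 : t02 = g0 * lam1)
    (htN2 : tN2 = -lam2) (htN1 : tN1 = -g1 * lam2) :
    (lam1 * a1 ^ 2 + lam2 * a2 ^ 2
        - (t01 * a1 * (a1 - g0 * a2) + t02 * a2 * (a1 - g0 * a2)))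
      - (lam1 * b1 ^ 2 + lam2 * b2 ^ 2
        + (tN1 * b1 * (b2 - g1 * b1) + tN2 * b2 * (b2 - g1 * b1)))
      = (lam2 + lam1 * g0 ^ 2) * a2 ^ 2 - (lam1 + lam2 * g1 ^ 2) * b1 ^ 2 ∧
    (lam2 + lam1 * g0 ^ 2) * a2 ^ 2 - (lam1 + lam2 * g1 ^ 2) * b1 ^ 2 ≤ 0 := by
  constructor
  · rw [ht01, ht02, htN2, htN1]; ring
  · have hA : lam2 + lam1 * g0 ^ 2 ≤ 0 := by
      have := (le_div_iff₀ h1).mp hg0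
      nlinarith
    have hB : 0 ≤ lam1 + lam2 * g1 ^ 2 := by
      have := (le_div_iff_of_neg h2).mp hg1
      nlinarith
    nlinarith [sq_nonneg a2, sq_nonneg b1]
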